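/- arXiv:2310.05767 — 2 statements merged into one kernel-verified Lean document; each statement's English description precedes it below -/
import Mathlib

section
/- Let G=(V,E) be a finite simple graph with at least one edge, and let a partition of V be given in which some vertex v with deg(v) ≥ 1 forms a singleton cluster. For each cluster C_i containing at least one neighbor of v, let k_i be the number of neighbors of v in C_i. Adding v to cluster C_i changes the modularity by Δ_i = k_i/|E| − 2·deg(v)·(Σ_{w∈C_i} deg(w))/(4|E|²). Then Σ_i Δ_i > 0, so at least one Δ_i is strictly positive; i.e., the singleton cluster can be merged into a neighboring cluster so as to strictly increase modularity. -/
open Finset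

theorem singleton_cluster_merge_increases_modularity
    {V : Type*} [Fintype V] [DecidableEq V]
    (G : SimpleGraph V) [DecidableRel G.Adj]
    {ι : Type*} [Fintype ι] [DecidableEq ι]
    (c : V → ι) (v : V)
    (hdeg : 1 ≤ G.degree v)
    (hE : G.edgeFinset.Nonempty)
    (hsingle : ∀ w : V, c w = c v → w = v)
    (Δ : ι → ℝ)
    (hΔ : ∀ i : ι, Δ i =
      (((G.neighborFinset v).filter (fun w => c w = i)).card : ℝ) / (G.edgeFinset.card : ℝ)
        - 2 * (G.degree v : ℝ) *
            (∑ w ∈ univ.filter (fun w => c w = i), (G.degree w : ℝ)) /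
          (4 * (G.edgeFinset.card : ℝ) ^ 2)) :
    0 < ∑ i ∈ univ.filter (fun i => ∃ w ∈ G.neighborFinset v, c w = i), Δ i ∧
      ∃ i ∈ univ.filter (fun i => ∃ w ∈ G.neighborFinset v, c w = i), 0 < Δ i := by
  classical
  set A : Finset ι := univ.filter (fun i => ∃ w ∈ G.neighborFinset v, c w = i) with hA
  set m : ℕ := G.edgeFinset.card with hmdef
  have hm : 0 < m := Finset.card_pos.mpr hE
  have hmR : (0:ℝ) < (m:ℝ) := by exact_mod_cast hm
  have hdR : (1:ℝ) ≤ (G.degree v : ℝ) := by exact_mod_cast hdeg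
  -- c v is not a relevant cluster
  have hvA : c v ∉ A := by
    simp only [hA, mem_filter, mem_univ, true_and]
    rintro ⟨w, hw, hcw⟩
    have hwv : w = v := hsingle w hcw
    subst hwv
    exact G.irrefl ((G.mem_neighborFinset _ _).mp hw)
  -- sum of the k_i equals deg v
  have hk : ∑ i ∈ A, (((G.neighborFinset v).filter (fun w => c w = i)).card) = G.degree v := by
    rw [← G.card_neighborFinset_eq_degree v]
    refine (Finset.card_eq_sum_card_fiberwise (f := c) (fun w hw => ?_)).symm
    simp only [hA, mem_filter, mem_univ, true_and]
    exact (mem_filter.mpr ⟨mem_univ _, w, hw, rfl⟩ : c w ∈ A)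
  -- sum of degree-sums over relevant clusters
  set s : Finset V := univ.filter (fun w => c w ∈ A) with hs
  have hfib : ∀ i ∈ A, (univ.filter (fun w => c w = i)) = s.filter (fun w => c w = i) := by
    intro i hi
    ext w
    simp only [hs, mem_filter, mem_univ, true_and]
    constructor
    · intro h; exact ⟨h ▸ hi, h⟩
    · exact fun h => h.2
  have hSsum' : ∑ i ∈ A, ∑ w ∈ univ.filter (fun w => c w = i), (G.degree w : ℝ)
      = ∑ w ∈ s, (G.degree w : ℝ) := by
    rw [Finset.sum_congr rfl (fun i hi => by rw [hfib i hi])]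
    exact Finset.sum_fiberwise_of_maps_to (g := c) (fun w hw => (mem_filter.mp hw).2) _
  set S : ℝ := ∑ w ∈ s, (G.degree w : ℝ) with hS
  -- s ⊆ univ.erase v
  have hsub : s ⊆ univ.erase v := by
    intro w hw
    rcases mem_filter.mp hw with ⟨-, hwA⟩
    refine mem_erase.mpr ⟨fun h => hvA (h ▸ hwA), mem_univ w⟩
  have hhand : ∑ w : V, (G.degree w : ℝ) = 2 * (m:ℝ) := by
    have h0 := G.sum_degrees_eq_twice_card_edges
    exact_mod_cast h0
  have herase : ∑ w ∈ univ.erase v, (G.degree w : ℝ) = 2 * (m:ℝ) - (G.degree v : ℝ) := by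
    have h := Finset.add_sum_erase univ (fun w => (G.degree w : ℝ)) (mem_univ v)
    rw [hhand] at h
    linarith
  have hSle : S ≤ 2 * (m:ℝ) - (G.degree v : ℝ) := by
    rw [← herase]
    exact Finset.sum_le_sum_of_subset_of_nonneg hsub (fun w _ _ => by positivity)
  -- compute the total sum
  have hksum : ∑ i ∈ A, (((G.neighborFinset v).filter (fun w => c w = i)).card : ℝ)
      = (G.degree v : ℝ) := by exact_mod_cast congrArg (Nat.cast : ℕ → ℝ) hk
  have htotal : ∑ i ∈ A, Δ i
      = (G.degree v : ℝ) / (m:ℝ) - 2 * (G.degree v : ℝ) * S / (4 * (m:ℝ)^2) := by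
    simp only [hΔ]
    rw [Finset.sum_sub_distrib, ← Finset.sum_div, hksum, ← Finset.sum_div,
      ← Finset.mul_sum, hSsum']
  have hpos : 0 < ∑ i ∈ A, Δ i := by
    rw [htotal]
    have key : (G.degree v : ℝ) / (m:ℝ) - 2 * (G.degree v : ℝ) * S / (4 * (m:ℝ)^2)
        = (G.degree v : ℝ) * (2 * (m:ℝ) - S) / (2 * (m:ℝ)^2) := by
      field_simp
      ring
    rw [key]
    apply div_pos
    · apply mul_pos (by linarith)
      nlinarith
    · positivity
  refine ⟨hpos, ?_⟩
  by_contra h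
  push_neg at h
  have : ∑ i ∈ A, Δ i ≤ 0 := Finset.sum_nonpos h
  linarith
end

section
/- Let a_0 < b_0 < 1 + a_0 be reals and define a(t) = (a_0 + b_0 − 1/(e^{2t+c}+1))/2 and b(t) = (a_0 + b_0 + 1/(e^{2t+c}+1))/2, where c = ln(1/(b_0 − a_0) − 1). Then a and b solve the system a'(t) = (b(t)−a(t))(1+a(t)−b(t)) and b'(t) = −a'(t) with initial conditions a(0)=a_0, b(0)=b_0. -/
theorem explicit_solution_of_bounded_confidence_example
    (a0 b0 : ℝ) (h1 : a0 < b0) (h2 : b0 < 1 + a0)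
    (c : ℝ) (hc : c = Real.log (1 / (b0 - a0) - 1))
    (a b : ℝ → ℝ)
    (ha : ∀ t, a t = (a0 + b0 - 1 / (Real.exp (2 * t + c) + 1)) / 2)
    (hb : ∀ t, b t = (a0 + b0 + 1 / (Real.exp (2 * t + c) + 1)) / 2) :
    a 0 = a0 ∧ b 0 = b0 ∧
      (∀ t, HasDerivAt a ((b t - a t) * (1 + a t - b t)) t) ∧
      (∀ t, HasDerivAt b (-((b t - a t) * (1 + a t - b t))) t) := by
  have hd : 0 < b0 - a0 := by linarith
  have hpos : 0 < 1 / (b0 - a0) - 1 := by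
    have : 1 < 1 / (b0 - a0) := by
      rw [lt_div_iff₀ hd]; linarith
    linarith
  have hec : Real.exp c = 1 / (b0 - a0) - 1 := by rw [hc, Real.exp_log hpos]
  have hu : ∀ t : ℝ, Real.exp (2 * t + c) + 1 ≠ 0 := fun t => by positivity
  have hc0 : Real.exp (2 * (0:ℝ) + c) = 1 / (b0 - a0) - 1 := by
    rw [show 2 * (0:ℝ) + c = c by ring, hec]
  have ha0 : a 0 = a0 := by
    rw [ha 0, hc0]; field_simp; ring
  have hb0 : b 0 = b0 := by
    rw [hb 0, hc0]; field_simp; ring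
  have hf : ∀ t : ℝ, HasDerivAt (fun t => 1 / (Real.exp (2 * t + c) + 1))
      (-(2 * Real.exp (2 * t + c)) / (Real.exp (2 * t + c) + 1) ^ 2) t := by
    intro t
    have h1' : HasDerivAt (fun t : ℝ => 2 * t + c) 2 t := by
      simpa using ((hasDerivAt_id t).const_mul 2).add_const c
    have h2' : HasDerivAt (fun t : ℝ => Real.exp (2 * t + c) + 1)
        (Real.exp (2 * t + c) * 2) t := ((Real.hasDerivAt_exp _).comp t h1').add_const 1
    have h3' := h2'.inv (hu t)
    simpa [one_div, mul_comm, Pi.inv_def] using h3'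
  have key : ∀ t, HasDerivAt a ((b t - a t) * (1 + a t - b t)) t := by
    intro t
    have := ((hasDerivAt_const t (a0 + b0)).sub (hf t)).div_const 2
    have heq : (0 - -(2 * Real.exp (2 * t + c)) / (Real.exp (2 * t + c) + 1) ^ 2) / 2
        = (b t - a t) * (1 + a t - b t) := by
      rw [ha t, hb t]
      field_simp
      ring
    have ha' : a = fun t => (a0 + b0 - 1 / (Real.exp (2 * t + c) + 1)) / 2 :=
      funext ha
    rw [← heq, ha']
    exact this
  refine ⟨ha0, hb0, key, fun t => ?_⟩
  have hb' : b = fun t => (a0 + b0 + 1 / (Real.exp (2 * t + c) + 1)) / 2 := funext hb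
  have := ((hasDerivAt_const t (a0 + b0)).add (hf t)).div_const 2
  have heq : (0 + -(2 * Real.exp (2 * t + c)) / (Real.exp (2 * t + c) + 1) ^ 2) / 2
      = -((b t - a t) * (1 + a t - b t)) := by
    rw [ha t, hb t]
    field_simp
    ring
  rw [← heq, hb']
  exact this
end
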